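/- Let u, v ∈ S_n be permutations of the same Coxeter length ℓ. If θ_{D_u}(S) = θ_{D_v}(S) for every suffix set S = {i, i+1, ..., n} (1 ≤ i ≤ n), then u = v. -/

import Mathlib

open Finset
open scoped Classical

/-- The Rothe diagram of a permutation `w`:
`{(i,j) : w(i) > j and w⁻¹(j) > i}`. -/
noncomputable def RotheDiagram {n : ℕ} (w : Equiv.Perm (Fin n)) : Finset (Fin n × Fin n) :=
  Finset.univ.filter (fun p => p.2 < w p.1 ∧ p.1 < w.symm p.2)

/-- One step of reading the column word: state is (number of currently unmatched
'(' 's, number of matched pairs plus stars so far). -/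
noncomputable def thetaStep {n : ℕ} (D : Finset (Fin n × Fin n)) (S : Finset (Fin n))
    (c : Fin n) (st : ℕ × ℕ) (r : Fin n) : ℕ × ℕ :=
  if (r, c) ∈ D then
    if r ∈ S then (st.1, st.2 + 1)          -- '★'
    else if 0 < st.1 then (st.1 - 1, st.2 + 1)  -- matched ')'
    else st                                  -- unmatched ')'
  else if r ∈ S then (st.1 + 1, st.2) else st  -- '('

/-- `θ_D^c(S)`: the number of matched parenthesis pairs plus stars in the
column word of column `c`. -/
noncomputable def thetaCol {n : ℕ} (D : Finset (Fin n × Fin n)) (S : Finset (Fin n))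
    (c : Fin n) : ℕ :=
  ((List.finRange n).foldl (thetaStep D S c) (0, 0)).2

/-- `θ_D(S) = Σ_c θ_D^c(S)`. -/
noncomputable def theta {n : ℕ} (D : Finset (Fin n × Fin n)) (S : Finset (Fin n)) : ℕ :=
  ∑ c : Fin n, thetaCol D S c

/-- The Coxeter length of `w`: the number of inversions. -/
noncomputable def permLength {n : ℕ} (w : Equiv.Perm (Fin n)) : ℕ :=
  (Finset.univ.filter (fun p : Fin n × Fin n => p.1 < p.2 ∧ w p.2 < w p.1)).card

section Aux
variable {n : ℕ}

noncomputable def suffixSet (i : Fin n) : Finset (Fin n) := Finset.univ.filter (fun j => i ≤ j)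

lemma mem_suffixSet {i r : Fin n} : r ∈ suffixSet i ↔ i ≤ r := by simp [suffixSet]

lemma foldl_lo (D : Finset (Fin n × Fin n)) (i c : Fin n) (L : List (Fin n))
    (hL : ∀ r ∈ L, r < i) :
    L.foldl (thetaStep D (suffixSet i) c) (0, 0) = (0, 0) := by
  induction L with
  | nil => rfl
  | cons r L ih =>
    have hr : r < i := hL r List.mem_cons_self
    have hrS : r ∉ suffixSet i := by simp [mem_suffixSet, not_le.mpr hr]
    have hstep : thetaStep D (suffixSet i) c (0, 0) r = (0, 0) := by
      simp [thetaStep, hrS]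
    rw [List.foldl_cons, hstep]
    exact ih (fun x hx => hL x (List.mem_cons_of_mem _ hx))

lemma foldl_hi (D : Finset (Fin n × Fin n)) (i c : Fin n) (L : List (Fin n))
    (hL : ∀ r ∈ L, i ≤ r) (st : ℕ × ℕ) :
    (L.foldl (thetaStep D (suffixSet i) c) st).2
      = st.2 + (L.filter (fun r => decide ((r, c) ∈ D))).length := by
  induction L generalizing st with
  | nil => simp
  | cons r L ih =>
    have hrS : r ∈ suffixSet i := mem_suffixSet.mpr (hL r List.mem_cons_self)
    rw [List.foldl_cons, ih (fun x hx => hL x (List.mem_cons_of_mem _ hx))]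
    by_cases hD : (r, c) ∈ D
    · simp [thetaStep, hD, hrS, List.filter_cons]
      omega
    · simp [thetaStep, hD, hrS, List.filter_cons]

lemma thetaCol_suffix (D : Finset (Fin n × Fin n)) (i c : Fin n) :
    thetaCol D (suffixSet i) c
      = (Finset.univ.filter (fun r => i ≤ r ∧ (r, c) ∈ D)).card := by
  classical
  have hsplit := List.take_append_drop i.val (List.finRange n)
  have htake : ∀ r ∈ (List.finRange n).take i.val, r < i := by
    intro r hr
    rw [List.mem_take_iff_getElem] at hr
    obtain ⟨k, hk, hke⟩ := hr
    have : k < i.val := lt_of_lt_of_le hk (min_le_left _ _)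
    simp only [List.getElem_finRange] at hke
    rw [← hke]
    simpa [Fin.lt_def] using this
  have hdrop : ∀ r ∈ (List.finRange n).drop i.val, i ≤ r := by
    intro r hr
    rw [List.mem_drop_iff_getElem] at hr
    obtain ⟨k, hk, hke⟩ := hr
    simp only [List.getElem_finRange] at hke
    rw [← hke]
    simp [Fin.le_def]
  unfold thetaCol
  conv_lhs => rw [← hsplit]
  rw [List.foldl_append, foldl_lo D i c _ htake, foldl_hi D i c _ hdrop]
  -- now: 0 + (drop.filter _).length = card
  have hlist : (List.finRange n).filter (fun r => decide (i ≤ r ∧ (r, c) ∈ D))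
      = ((List.finRange n).drop i.val).filter (fun r => decide ((r, c) ∈ D)) := by
    conv_lhs => rw [← hsplit]
    rw [List.filter_append]
    have h1 : ((List.finRange n).take i.val).filter
        (fun r => decide (i ≤ r ∧ (r, c) ∈ D)) = [] := by
      apply List.filter_eq_nil_iff.mpr
      intro r hr
      have := htake r hr
      simp [not_le.mpr this]
    rw [h1, List.nil_append]
    apply List.filter_congr
    intro r hr
    have := hdrop r hr
    simp [this]
  rw [← hlist]
  have hnodup : (List.finRange n).Nodup := List.nodup_finRange n
  rw [← List.toFinset_card_of_nodup (hnodup.filter _)]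
  congr 1
  rw [List.toFinset_filter]
  simp [List.toFinset_finRange]

lemma theta_suffix (D : Finset (Fin n × Fin n)) (i : Fin n) :
    theta D (suffixSet i) = (D.filter (fun p => i ≤ p.1)).card := by
  classical
  rw [Finset.card_eq_sum_card_fiberwise
    (f := Prod.snd) (t := Finset.univ) (fun p _ => Finset.mem_univ _)]
  unfold theta
  apply Finset.sum_congr rfl
  intro c _
  rw [thetaCol_suffix]
  apply Finset.card_bij' (fun r _ => (r, c)) (fun p _ => p.1)
  · intro r hr
    simp only [Finset.mem_filter, Finset.mem_univ, true_and] at hr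
    simp [Finset.mem_filter, hr.1, hr.2]
  · intro p hp
    simp only [Finset.mem_filter, Finset.mem_univ, true_and] at hp ⊢
    obtain ⟨⟨hpD, hpi⟩, hpc⟩ := hp
    refine ⟨hpi, ?_⟩
    rwa [show (p.1, c) = p by rw [← hpc]]
  · intro r hr
    rfl
  · intro p hp
    simp only [Finset.mem_filter] at hp
    rw [← hp.2]

noncomputable def rowD (D : Finset (Fin n × Fin n)) (r : Fin n) : ℕ :=
  (D.filter (fun p => p.1 = r)).card

lemma suffix_card_eq_sum (D : Finset (Fin n × Fin n)) (i : Fin n) :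
    (D.filter (fun p => i ≤ p.1)).card
      = ∑ r ∈ Finset.univ.filter (fun r : Fin n => i ≤ r), rowD D r := by
  classical
  rw [Finset.card_eq_sum_card_fiberwise
    (f := Prod.fst) (t := Finset.univ.filter (fun r : Fin n => i ≤ r))
    (fun p hp => by
      simp only [Finset.mem_coe, Finset.mem_filter] at hp ⊢
      exact ⟨Finset.mem_univ _, hp.2⟩)]
  apply Finset.sum_congr rfl
  intro r hr
  simp only [Finset.mem_filter, Finset.mem_univ, true_and] at hr
  unfold rowD
  congr 1
  rw [Finset.filter_filter]
  apply Finset.filter_congr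
  intro p hp
  constructor
  · intro h; exact h.2
  · intro h; exact ⟨h ▸ hr, h⟩

noncomputable def code (u : Equiv.Perm (Fin n)) (r : Fin n) : ℕ :=
  (Finset.univ.filter (fun j => r < j ∧ u j < u r)).card

lemma mem_RotheDiagram {u : Equiv.Perm (Fin n)} {p : Fin n × Fin n} :
    p ∈ RotheDiagram u ↔ p.2 < u p.1 ∧ p.1 < u.symm p.2 := by
  simp [RotheDiagram]

lemma rowD_eq_code (u : Equiv.Perm (Fin n)) (r : Fin n) :
    rowD (RotheDiagram u) r = code u r := by
  classical
  unfold rowD code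
  apply Finset.card_bij' (fun p _ => u.symm p.2) (fun j _ => (r, u j))
  · intro p hp
    simp only [Finset.mem_filter, mem_RotheDiagram, Finset.mem_univ, true_and] at hp ⊢
    obtain ⟨⟨h1, h2⟩, h3⟩ := hp
    refine ⟨h3 ▸ h2, ?_⟩
    rw [Equiv.apply_symm_apply]
    exact h3 ▸ h1
  · intro j hj
    simp only [Finset.mem_filter, Finset.mem_univ, true_and] at hj
    simp only [Finset.mem_filter, mem_RotheDiagram]
    exact ⟨⟨hj.2, by simpa using hj.1⟩, trivial⟩
  · intro p hp
    simp only [Finset.mem_filter] at hp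
    rw [Equiv.apply_symm_apply, ← hp.2]
  · intro j hj
    rw [Equiv.symm_apply_apply]

lemma rank_eq {α : Type*} [LinearOrder α] [DecidableEq α] (V : Finset α) {a b : α}
    (ha : a ∈ V) (hb : b ∈ V)
    (h : (V.filter (fun x => x < a)).card = (V.filter (fun x => x < b)).card) : a = b := by
  classical
  have key : ∀ x y : α, x ∈ V → x < y →
      (V.filter (fun z => z < x)).card < (V.filter (fun z => z < y)).card := by
    intro x y hx hxy
    apply Finset.card_lt_card
    constructor
    · intro z hz
      simp only [Finset.mem_filter] at hz ⊢
      exact ⟨hz.1, lt_trans hz.2 hxy⟩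
    · intro hsub
      have : x ∈ V.filter (fun z => z < x) := hsub (by simp [Finset.mem_filter, hx, hxy])
      simp at this
  rcases lt_trichotomy a b with h1 | h1 | h1
  · exact absurd h (ne_of_lt (key a b ha h1))
  · exact h1
  · exact absurd h.symm (ne_of_lt (key b a hb h1))

lemma code_inj (u v : Equiv.Perm (Fin n)) (h : ∀ r, code u r = code v r) : u = v := by
  classical
  have key : ∀ m : ℕ, ∀ r : Fin n, r.val = m → u r = v r := by
    intro m
    induction m using Nat.strong_induction_on with
    | _ m ih =>
    intro r hr
    have hpre : ∀ j : Fin n, j < r → u j = v j := by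
      intro j hj
      exact ih j.val (hr ▸ hj) j rfl
    set V : Finset (Fin n) := Finset.univ.filter (fun x => ∀ j : Fin n, j < r → u j ≠ x)
      with hV
    have hVv : V = Finset.univ.filter (fun x => ∀ j : Fin n, j < r → v j ≠ x) := by
      apply Finset.filter_congr
      intro x _
      constructor <;> intro hh j hj
      · rw [← hpre j hj]; exact hh j hj
      · rw [hpre j hj]; exact hh j hj
    have haV : u r ∈ V := by
      simp only [hV, Finset.mem_filter, Finset.mem_univ, true_and]
      intro j hj hju
      exact absurd (u.injective hju) (ne_of_lt hj)
    have hbV : v r ∈ V := by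
      rw [hVv]
      simp only [Finset.mem_filter, Finset.mem_univ, true_and]
      intro j hj hjv
      exact absurd (v.injective hjv) (ne_of_lt hj)
    have hcard : ∀ w : Equiv.Perm (Fin n),
        ((Finset.univ.filter (fun x : Fin n => ∀ j : Fin n, j < r → w j ≠ x)).filter
          (fun x => x < w r)).card = code w r := by
      intro w
      unfold code
      apply Finset.card_bij' (fun x _ => w.symm x) (fun j _ => w j)
      · intro x hx
        simp only [Finset.mem_filter, Finset.mem_univ, true_and] at hx ⊢
        obtain ⟨hx1, hx2⟩ := hx
        have hne : w.symm x ≠ r := by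
          intro hc
          rw [← hc, Equiv.apply_symm_apply] at hx2
          exact lt_irrefl _ hx2
        have hnlt : ¬ (w.symm x < r) := by
          intro hc
          exact hx1 _ hc (w.apply_symm_apply x)
        refine ⟨lt_of_le_of_ne (not_lt.mp hnlt) (Ne.symm hne), ?_⟩
        rw [Equiv.apply_symm_apply]
        exact hx2
      · intro j hj
        simp only [Finset.mem_filter, Finset.mem_univ, true_and] at hj ⊢
        refine ⟨fun j' hj' hc => ?_, hj.2⟩
        have := w.injective hc
        rw [this] at hj'
        exact lt_asymm hj.1 hj'
      · intro x hx
        rw [Equiv.apply_symm_apply]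
      · intro j hj
        rw [Equiv.symm_apply_apply]
    apply rank_eq V haV hbV
    have h1 : (V.filter (fun x => x < u r)).card = code u r := by rw [hV]; exact hcard u
    have h2 : (V.filter (fun x => x < v r)).card = code v r := by rw [hVv]; exact hcard v
    rw [h1, h2, h r]
  exact Equiv.ext (fun r => key r.val r rfl)

end Aux

/-- If `u, v ∈ S_n` have the same length and `θ_{D_u}(S) = θ_{D_v}(S)` for all
suffix sets `S = {i, i+1, ..., n}`, then `u = v`. -/
theorem stmt18 {n : ℕ} (u v : Equiv.Perm (Fin n))
    (hlen : permLength u = permLength v)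
    (hθ : ∀ i : Fin n,
      theta (RotheDiagram u) (Finset.univ.filter (fun j => i ≤ j)) =
      theta (RotheDiagram v) (Finset.univ.filter (fun j => i ≤ j))) :
    u = v := by
  classical
  apply code_inj
  have hF : ∀ i : Fin n, ((RotheDiagram u).filter (fun p => i ≤ p.1)).card
      = ((RotheDiagram v).filter (fun p => i ≤ p.1)).card := by
    intro i
    have h := hθ i
    rwa [show (Finset.univ.filter fun j => i ≤ j) = suffixSet i from rfl,
      theta_suffix, theta_suffix] at h
  have hrow : ∀ m : ℕ, ∀ r : Fin n, n - r.val ≤ m →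
      rowD (RotheDiagram u) r = rowD (RotheDiagram v) r := by
    intro m
    induction m with
    | zero => intro r hr; have := r.isLt; omega
    | succ m ih =>
      intro r hr
      have hFr := hF r
      rw [suffix_card_eq_sum, suffix_card_eq_sum] at hFr
      have hsplit : Finset.univ.filter (fun j : Fin n => r ≤ j)
          = insert r (Finset.univ.filter (fun j : Fin n => r < j)) := by
        ext x
        simp only [Finset.mem_filter, Finset.mem_univ, true_and, Finset.mem_insert]
        rw [Fin.le_def, Fin.lt_def, Fin.ext_iff, eq_comm]
        omega
      have hnot : r ∉ Finset.univ.filter (fun j : Fin n => r < j) := by simp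
      rw [hsplit, Finset.sum_insert hnot, Finset.sum_insert hnot] at hFr
      have hsum : ∑ j ∈ Finset.univ.filter (fun j : Fin n => r < j),
            rowD (RotheDiagram u) j
          = ∑ j ∈ Finset.univ.filter (fun j : Fin n => r < j),
            rowD (RotheDiagram v) j := by
        apply Finset.sum_congr rfl
        intro j hj
        simp only [Finset.mem_filter, Finset.mem_univ, true_and, Fin.lt_def] at hj
        exact ih j (by omega)
      omega
  intro r
  rw [← rowD_eq_code, ← rowD_eq_code]
  exact hrow (n - r.val) r le_rfl
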